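/- Define, for t > 0, g(t) = (−8π sinh(π/t) + 8t cosh(π/t) + πt(cosh(2π/t) − 3)) / (128π t⁴ cosh³(π/t)). Then lim_{t→0⁺} t³ · e^{π/t} · g(t) = 1/32. Equivalently, the heat kernel of the non-isotropic bi-Heisenberg group (α₁ = 1, α₂ = 1/2) at the cut point ζ = (0,0,0,0,1), where d(0,ζ)² = 4π, satisfies g(t) = t^{−3} e^{−d²(0,ζ)/(4t)} φ(t) with φ(t) → 1/32 as t → 0⁺. -/

import Mathlib

open Real Filter

/-- The bi-Heisenberg heat kernel (non-isotropic case `α₁ = 1`, `α₂ = 1/2`) at the cut point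
`ζ = (0,0,0,0,1)` on the vertical axis, as a function of time `t > 0`. -/
noncomputable def g (t : ℝ) : ℝ :=
  (-8 * Real.pi * Real.sinh (Real.pi / t) + 8 * t * Real.cosh (Real.pi / t) +
      Real.pi * t * (Real.cosh (2 * Real.pi / t) - 3)) /
    (128 * Real.pi * t ^ 4 * Real.cosh (Real.pi / t) ^ 3)

private lemma aux_A : Tendsto (fun t : ℝ => Real.exp (-(Real.pi / t)))
    (nhdsWithin 0 (Set.Ioi 0)) (nhds 0) := by
  have h1 : Tendsto (fun t : ℝ => Real.pi / t) (nhdsWithin 0 (Set.Ioi 0)) atTop := by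
    simpa [div_eq_mul_inv] using tendsto_inv_nhdsGT_zero.const_mul_atTop Real.pi_pos
  exact Real.tendsto_exp_neg_atTop_nhds_zero.comp h1

private lemma aux_B : Tendsto (fun t : ℝ => Real.exp (-(Real.pi / t)) / t)
    (nhdsWithin 0 (Set.Ioi 0)) (nhds 0) := by
  have h1 : Tendsto (fun t : ℝ => Real.pi / t) (nhdsWithin 0 (Set.Ioi 0)) atTop := by
    simpa [div_eq_mul_inv] using tendsto_inv_nhdsGT_zero.const_mul_atTop Real.pi_pos
  have h2 : Tendsto (fun x : ℝ => x ^ 1 * Real.exp (-x)) atTop (nhds 0) :=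
    Real.tendsto_pow_mul_exp_neg_atTop_nhds_zero 1
  have h3 : Tendsto (fun t : ℝ => (Real.pi / t) * Real.exp (-(Real.pi / t)))
      (nhdsWithin 0 (Set.Ioi 0)) (nhds 0) := by
    simpa [Function.comp_def] using h2.comp h1
  have h4 := h3.const_mul (Real.pi⁻¹)
  rw [mul_zero] at h4
  refine h4.congr' ?_
  filter_upwards [self_mem_nhdsWithin] with t ht
  have hπ := Real.pi_ne_zero
  field_simp

/-- Small-time asymptotics at the cut point in the non-isotropic case: since `d(0,ζ)² = 4π`,
one has `g(t) = t⁻³ e^{−d²(0,ζ)/(4t)} φ(t)` with `φ(t) = t³ e^{π/t} g(t) → 1/32`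
as `t → 0⁺`. -/
theorem heat_kernel_asymptotics_nonisotropic :
    Tendsto (fun t : ℝ => t ^ 3 * Real.exp (Real.pi / t) * g t)
      (nhdsWithin 0 (Set.Ioi 0)) (nhds (1 / 32)) := by
  set F : ℝ → ℝ := fun t =>
    (-4 * Real.pi * ((Real.exp (-(Real.pi / t)) / t)
        - Real.exp (-(Real.pi / t)) ^ 2 * (Real.exp (-(Real.pi / t)) / t))
      + 4 * (Real.exp (-(Real.pi / t)) + Real.exp (-(Real.pi / t)) ^ 3)
      + Real.pi * (1 + Real.exp (-(Real.pi / t)) ^ 4) / 2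
      - 3 * Real.pi * Real.exp (-(Real.pi / t)) ^ 2) /
    (16 * Real.pi * (1 + Real.exp (-(Real.pi / t)) ^ 2) ^ 3) with hF
  have hπ : Real.pi ≠ 0 := Real.pi_ne_zero
  have heq : ∀ᶠ t in nhdsWithin (0:ℝ) (Set.Ioi 0),
      t ^ 3 * Real.exp (Real.pi / t) * g t = F t := by
    filter_upwards [self_mem_nhdsWithin] with t ht
    have ht0 : (t:ℝ) ≠ 0 := ne_of_gt ht
    set E := Real.exp (Real.pi / t) with hE
    have hEpos : 0 < E := Real.exp_pos _
    have hA : Real.exp (-(Real.pi / t)) = E⁻¹ := by rw [Real.exp_neg]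
    have hsinh : Real.sinh (Real.pi / t) = (E - E⁻¹) / 2 := by
      rw [Real.sinh_eq, hE, Real.exp_neg]
    have hcosh : Real.cosh (Real.pi / t) = (E + E⁻¹) / 2 := by
      rw [Real.cosh_eq, hE, Real.exp_neg]
    have hcosh2 : Real.cosh (2 * Real.pi / t) = (E ^ 2 + (E ^ 2)⁻¹) / 2 := by
      rw [Real.cosh_eq, Real.exp_neg, hE, ← Real.exp_nat_mul]
      norm_num
      ring_nf
    have hsum : E + E⁻¹ ≠ 0 := by positivity
    have hsum2 : (1:ℝ) + E⁻¹ ^ 2 ≠ 0 := by positivity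
    rw [hF]
    simp only [g, hsinh, hcosh, hcosh2, hA]
    field_simp
    ring
  refine Tendsto.congr' (heq.mono fun t h => h.symm) ?_
  have hnum : Tendsto (fun t : ℝ =>
      -4 * Real.pi * ((Real.exp (-(Real.pi / t)) / t)
        - Real.exp (-(Real.pi / t)) ^ 2 * (Real.exp (-(Real.pi / t)) / t))
      + 4 * (Real.exp (-(Real.pi / t)) + Real.exp (-(Real.pi / t)) ^ 3)
      + Real.pi * (1 + Real.exp (-(Real.pi / t)) ^ 4) / 2
      - 3 * Real.pi * Real.exp (-(Real.pi / t)) ^ 2)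
      (nhdsWithin 0 (Set.Ioi 0)) (nhds (Real.pi / 2)) := by
    have hA := aux_A
    have hB := aux_B
    have := ((((hB.sub ((hA.pow 2).mul hB)).const_mul (-4 * Real.pi)).add
      ((hA.add (hA.pow 3)).const_mul 4)).add
      ((((hA.pow 4).const_add 1).const_mul Real.pi).div_const 2)).sub
      ((hA.pow 2).const_mul (3 * Real.pi))
    convert this using 2 <;> ring
  have hden : Tendsto (fun t : ℝ =>
      16 * Real.pi * (1 + Real.exp (-(Real.pi / t)) ^ 2) ^ 3)
      (nhdsWithin 0 (Set.Ioi 0)) (nhds (16 * Real.pi)) := by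
    have := (((aux_A.pow 2).const_add 1).pow 3).const_mul (16 * Real.pi)
    simpa using this
  have h := hnum.div hden (by positivity)
  convert h using 2
  · rfl
  field_simp
  ring
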